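/- Let Ξ ⊂ E(n) admit a honeycomb (T, p) with all cells of volume v, i.e. ℝⁿ is triangulated by simplices with vertices in {ξ(0) : ξ ∈ Ξ}, uniformly bounded diameters and inradii bounded below, each full-dimensional simplex labeled by p with p(s) containing a vertex of s, and each cell P_ξ = ∪_{p(s)=ξ} s̄ has volume v. Then the mean volume d(Ξ) = lim_{t→∞} vol B(0,t) / #{ξ ∈ Ξ : ξ(0) ∈ B(0,t)} exists and equals v. -/

import Mathlib

open MeasureTheory Filter
open scoped ENNReal

/-- If a countable `(r,R)`-set `Ξ` of isometries of `ℝⁿ` (identified here with the points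
`ξ(0)`, which are `r`-separated) admits a honeycomb whose cells `P i` all have volume `v`
(the cells contain their base points, are pairwise essentially disjoint, cover `ℝⁿ`, and have
uniformly bounded diameter `M`), then the mean volume
`d(Ξ) = lim_{t→∞} vol B(0,t) / #{ξ ∈ Ξ : ξ(0) ∈ B(0,t)}` exists and equals `v`. -/
theorem mean_volume_of_honeycomb (n : ℕ) (v r M : ℝ) (hv : 0 < v) (hr : 0 < r) (hM : 0 < M)
    (Ξ : ℕ → EuclideanSpace ℝ (Fin n))
    (hsep : ∀ i j, i ≠ j → r ≤ dist (Ξ i) (Ξ j))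
    (P : ℕ → Set (EuclideanSpace ℝ (Fin n)))
    (hmeas : ∀ i, MeasurableSet (P i))
    (hmem : ∀ i, Ξ i ∈ P i)
    (hvol : ∀ i, volume (P i) = ENNReal.ofReal v)
    (hdisj : Pairwise fun i j => volume (P i ∩ P j) = 0)
    (hcover : (⋃ i, P i) = Set.univ)
    (hbdd : ∀ i, P i ⊆ Metric.closedBall (Ξ i) M) :
    Tendsto
      (fun t : ℝ =>
        (volume (Metric.ball (0 : EuclideanSpace ℝ (Fin n)) t)).toReal /
          (Nat.card {i : ℕ | Ξ i ∈ Metric.ball (0 : EuclideanSpace ℝ (Fin n)) t} : ℝ))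
      atTop (nhds v) := by
  rcases n with _ | m
  · -- `ℝ⁰` is a point, so the separation hypothesis is contradictory
    have h01 := hsep 0 1 (by norm_num)
    rw [Subsingleton.elim (Ξ 0) (Ξ 1), dist_self] at h01
    exact absurd h01 (not_le.2 hr)
  -- finiteness of the index sets
  have hfin : ∀ t : ℝ, {i : ℕ | Ξ i ∈ Metric.ball (0 : EuclideanSpace ℝ (Fin (m+1))) t}.Finite := by
    intro t
    set S := {i : ℕ | Ξ i ∈ Metric.ball (0 : EuclideanSpace ℝ (Fin (m+1))) t} with hS
    obtain ⟨F, hFsub, hFfin, hFcov⟩ :=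
      (isCompact_closedBall (0 : EuclideanSpace ℝ (Fin (m+1))) t).finite_cover_balls (half_pos hr)
    have key : ∀ i : ℕ, ∃ x : EuclideanSpace ℝ (Fin (m+1)), i ∈ S → x ∈ F ∧ Ξ i ∈ Metric.ball x (r/2) := by
      intro i
      by_cases hi : i ∈ S
      · obtain ⟨x, hx, hx2⟩ := Set.mem_iUnion₂.1 (hFcov (Metric.ball_subset_closedBall hi))
        exact ⟨x, fun _ => ⟨hx, hx2⟩⟩
      · exact ⟨0, fun h => absurd h hi⟩
    choose g hg using key
    have hinj : Set.InjOn g S := by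
      intro i hi j hj hij
      by_contra hne
      have h1 := (hg i hi).2
      have h2 := (hg j hj).2
      rw [Metric.mem_ball] at h1 h2
      rw [hij] at h1
      have h3 := hsep i j hne
      have h4 : dist (Ξ i) (Ξ j) ≤ dist (Ξ i) (g j) + dist (g j) (Ξ j) := dist_triangle _ _ _
      rw [dist_comm (g j) (Ξ j)] at h4
      linarith
    exact Set.Finite.of_finite_image
      (hFfin.subset (by rintro _ ⟨i, hi, rfl⟩; exact (hg i hi).1)) hinj
  -- the finite index sets as Finsets
  set Fs : ℝ → Finset ℕ := fun t => (hfin t).toFinset with hFs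
  have hmemFs : ∀ t i, i ∈ Fs t ↔ Ξ i ∈ Metric.ball (0 : EuclideanSpace ℝ (Fin (m+1))) t := by
    intro t i; simp [hFs, Set.Finite.mem_toFinset]
  have hcardeq : ∀ t : ℝ,
      (Nat.card {i : ℕ | Ξ i ∈ Metric.ball (0 : EuclideanSpace ℝ (Fin (m+1))) t} : ℝ) = ((Fs t).card : ℝ) := by
    intro t
    rw [Nat.card_coe_set_eq, Set.ncard_eq_toFinset_card _ (hfin t)]
  -- total measure of cells with centers in ball t
  have hsum : ∀ t : ℝ, volume (⋃ i ∈ Fs t, P i) = ((Fs t).card : ℝ≥0∞) * ENNReal.ofReal v := by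
    intro t
    rw [measure_biUnion_finset₀ (fun i _ j _ hij => hdisj hij)
      (fun i _ => (hmeas i).nullMeasurableSet)]
    simp [hvol, Finset.sum_const, nsmul_eq_mul]
  -- upper bound
  have hupper : ∀ t : ℝ, ((Fs t).card : ℝ≥0∞) * ENNReal.ofReal v
      ≤ volume (Metric.closedBall (0 : EuclideanSpace ℝ (Fin (m+1))) (t + M)) := by
    intro t
    rw [← hsum t]
    apply measure_mono
    intro x hx
    obtain ⟨i, hi, hxi⟩ := Set.mem_iUnion₂.1 hx
    have h1 : dist x (Ξ i) ≤ M := Metric.mem_closedBall.1 (hbdd i hxi)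
    have h2 : dist (Ξ i) (0 : EuclideanSpace ℝ (Fin (m+1))) < t := Metric.mem_ball.1 ((hmemFs t i).1 hi)
    have := dist_triangle x (Ξ i) (0 : EuclideanSpace ℝ (Fin (m+1)))
    exact Metric.mem_closedBall.2 (by linarith)
  -- lower bound
  have hlower : ∀ t : ℝ, volume (Metric.ball (0 : EuclideanSpace ℝ (Fin (m+1))) (t - M))
      ≤ ((Fs t).card : ℝ≥0∞) * ENNReal.ofReal v := by
    intro t
    rw [← hsum t]
    apply measure_mono
    intro x hx
    have hx' : x ∈ ⋃ i, P i := by rw [hcover]; trivial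
    obtain ⟨i, hxi⟩ := Set.mem_iUnion.1 hx'
    have h1 : dist x (Ξ i) ≤ M := Metric.mem_closedBall.1 (hbdd i hxi)
    have h2 : dist x (0 : EuclideanSpace ℝ (Fin (m+1))) < t - M := Metric.mem_ball.1 hx
    have h3 : dist (Ξ i) (0 : EuclideanSpace ℝ (Fin (m+1))) < t := by
      have := dist_triangle (Ξ i) x (0 : EuclideanSpace ℝ (Fin (m+1)))
      rw [dist_comm (Ξ i) x] at this
      linarith
    exact Set.mem_iUnion₂.2 ⟨i, (hmemFs t i).2 (Metric.mem_ball.2 h3), hxi⟩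
  -- positivity of the count
  have hpos : ∀ t : ℝ, M < t → 1 ≤ (Fs t).card := by
    intro t ht
    obtain ⟨i, hi⟩ := Set.mem_iUnion.1 (hcover ▸ (Set.mem_univ (0 : EuclideanSpace ℝ (Fin (m+1)))))
    have h1 : dist (0 : EuclideanSpace ℝ (Fin (m+1))) (Ξ i) ≤ M := Metric.mem_closedBall.1 (hbdd i hi)
    have : i ∈ Fs t := (hmemFs t i).2 (Metric.mem_ball.2 (by rw [dist_comm] at h1; linarith))
    exact Finset.card_pos.2 ⟨i, this⟩
  -- volume formulas
  set B1 := volume (Metric.ball (0 : EuclideanSpace ℝ (Fin (m+1))) 1) with hB1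
  have hB1top : B1 ≠ ⊤ := measure_ball_lt_top.ne
  set c := B1.toReal with hc
  have hcpos : 0 < c := ENNReal.toReal_pos (Metric.measure_ball_pos _ _ one_pos).ne' hB1top
  have hballvol : ∀ s : ℝ, 0 ≤ s → (volume (Metric.ball (0 : EuclideanSpace ℝ (Fin (m+1))) s)).toReal = s ^ (m+1) * c := by
    intro s hs
    rw [Measure.addHaar_ball volume 0 hs, finrank_euclideanSpace_fin,
      ENNReal.toReal_mul, ENNReal.toReal_ofReal (pow_nonneg hs _)]
  have hcballvol : ∀ s : ℝ, 0 ≤ s →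
      (volume (Metric.closedBall (0 : EuclideanSpace ℝ (Fin (m+1))) s)).toReal = s ^ (m+1) * c := by
    intro s hs
    rw [Measure.addHaar_closedBall volume 0 hs, finrank_euclideanSpace_fin,
      ENNReal.toReal_mul, ENNReal.toReal_ofReal (pow_nonneg hs _)]
  -- real-number versions of the bounds, for t ≥ M + 1
  have hrealupper : ∀ t : ℝ, M + 1 ≤ t → ((Fs t).card : ℝ) * v ≤ (t + M) ^ (m+1) * c := by
    intro t ht
    have h1 := ENNReal.toReal_mono (measure_closedBall_lt_top).ne (hupper t)
    rwa [ENNReal.toReal_mul, ENNReal.toReal_natCast, ENNReal.toReal_ofReal hv.le,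
      hcballvol (t + M) (by linarith)] at h1
  have hreallower : ∀ t : ℝ, M + 1 ≤ t → (t - M) ^ (m+1) * c ≤ ((Fs t).card : ℝ) * v := by
    intro t ht
    have hfin2 : ((Fs t).card : ℝ≥0∞) * ENNReal.ofReal v ≠ ⊤ :=
      ENNReal.mul_ne_top (ENNReal.natCast_ne_top _) ENNReal.ofReal_ne_top
    have h1 := ENNReal.toReal_mono hfin2 (hlower t)
    rwa [ENNReal.toReal_mul, ENNReal.toReal_natCast, ENNReal.toReal_ofReal hv.le,
      hballvol (t - M) (by linarith)] at h1
  -- the squeeze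
  have hgl : Tendsto (fun t : ℝ => v * (t ^ (m+1) / (t + M) ^ (m+1))) atTop (nhds v) := by
    have h0 : Tendsto (fun t : ℝ => M / (t + M)) atTop (nhds 0) :=
      Tendsto.div_atTop tendsto_const_nhds (tendsto_atTop_add_const_right _ M tendsto_id)
    have h1 : Tendsto (fun t : ℝ => 1 - M / (t + M)) atTop (nhds 1) := by
      simpa using (tendsto_const_nhds (x := (1:ℝ)) (f := atTop)).sub h0
    have h2 : Tendsto (fun t : ℝ => (1 - M / (t + M)) ^ (m+1)) atTop (nhds 1) := by
      simpa using h1.pow (m+1)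
    have h3 : (fun t : ℝ => (1 - M / (t + M)) ^ (m+1)) =ᶠ[atTop] fun t => t ^ (m+1) / (t + M) ^ (m+1) := by
      filter_upwards [eventually_gt_atTop 0] with t ht
      have htM : t + M ≠ 0 := by positivity
      rw [← div_pow]
      congr 1
      field_simp
      ring
    have h4 : Tendsto (fun t : ℝ => t ^ (m+1) / (t + M) ^ (m+1)) atTop (nhds 1) := h2.congr' h3
    simpa using (tendsto_const_nhds (x := v) (f := atTop)).mul h4
  have hgu : Tendsto (fun t : ℝ => v * (t ^ (m+1) / (t - M) ^ (m+1))) atTop (nhds v) := by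
    have h0 : Tendsto (fun t : ℝ => M / (t - M)) atTop (nhds 0) :=
      Tendsto.div_atTop tendsto_const_nhds (tendsto_atTop_add_const_right _ (-M) tendsto_id)
    have h1 : Tendsto (fun t : ℝ => 1 + M / (t - M)) atTop (nhds 1) := by
      simpa using (tendsto_const_nhds (x := (1:ℝ)) (f := atTop)).add h0
    have h2 : Tendsto (fun t : ℝ => (1 + M / (t - M)) ^ (m+1)) atTop (nhds 1) := by
      simpa using h1.pow (m+1)
    have h3 : (fun t : ℝ => (1 + M / (t - M)) ^ (m+1)) =ᶠ[atTop] fun t => t ^ (m+1) / (t - M) ^ (m+1) := by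
      filter_upwards [eventually_ge_atTop (M + 1)] with t ht
      have htM : t - M ≠ 0 := by intro h; rw [sub_eq_zero] at h; linarith
      rw [← div_pow]
      congr 1
      field_simp
      ring
    have h4 : Tendsto (fun t : ℝ => t ^ (m+1) / (t - M) ^ (m+1)) atTop (nhds 1) := h2.congr' h3
    simpa using (tendsto_const_nhds (x := v) (f := atTop)).mul h4
  apply tendsto_of_tendsto_of_tendsto_of_le_of_le' hgl hgu
  · -- lower bound on the function
    filter_upwards [eventually_ge_atTop (M + 1)] with t ht
    have hN1 : (1:ℝ) ≤ ((Fs t).card : ℝ) := by exact_mod_cast hpos t (by linarith)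
    have hNpos : (0:ℝ) < ((Fs t).card : ℝ) := by linarith
    have ht0 : (0:ℝ) < t := by linarith
    have htM : (0:ℝ) < t + M := by linarith
    rw [hcardeq t, hballvol t ht0.le]
    rw [le_div_iff₀ hNpos]
    have hub := hrealupper t ht
    have key : v * (t ^ (m+1) / (t + M) ^ (m+1)) * ((Fs t).card : ℝ)
        = (((Fs t).card : ℝ) * v) * (t ^ (m+1) / (t + M) ^ (m+1)) := by ring
    rw [key]
    calc (((Fs t).card : ℝ) * v) * (t ^ (m+1) / (t + M) ^ (m+1))
        ≤ ((t + M) ^ (m+1) * c) * (t ^ (m+1) / (t + M) ^ (m+1)) := by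
          apply mul_le_mul_of_nonneg_right hub (by positivity)
      _ = t ^ (m+1) * c := by field_simp
  · -- upper bound on the function
    filter_upwards [eventually_ge_atTop (M + 1)] with t ht
    have hN1 : (1:ℝ) ≤ ((Fs t).card : ℝ) := by exact_mod_cast hpos t (by linarith)
    have hNpos : (0:ℝ) < ((Fs t).card : ℝ) := by linarith
    have ht0 : (0:ℝ) < t := by linarith
    have htM : (0:ℝ) < t - M := by linarith
    rw [hcardeq t, hballvol t ht0.le]
    rw [div_le_iff₀ hNpos]
    have hlb := hreallower t ht
    have key : v * (t ^ (m+1) / (t - M) ^ (m+1)) * ((Fs t).card : ℝ)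
        = (((Fs t).card : ℝ) * v) * (t ^ (m+1) / (t - M) ^ (m+1)) := by ring
    rw [key]
    calc t ^ (m+1) * c = ((t - M) ^ (m+1) * c) * (t ^ (m+1) / (t - M) ^ (m+1)) := by field_simp
      _ ≤ (((Fs t).card : ℝ) * v) * (t ^ (m+1) / (t - M) ^ (m+1)) := by
          apply mul_le_mul_of_nonneg_right hlb (by positivity)
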